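/- Let (R, m) be the perfection of a noetherian local F_p-algebra, with d = dim R > 0. Suppose H^d_m(R) is a simple R[φ]-module and Ann_R(H^d_m(R)) = (0). Then there is no nonzero element x ∈ H^d_m(R) with φ(x) = x. -/

import Mathlib

/-- An `R[φ]`-module structure on an `R`-module `M` over an `𝔽_p`-algebra `R`:
an additive map `φ : M → M` satisfying `φ (a • m) = a ^ p • φ m`. -/
structure FrobMod (p : ℕ) (R : Type) [CommRing R] (M : Type) [AddCommGroup M] [Module R M] where
  φ : M →+ M
  semilinear : ∀ (a : R) (m : M), φ (a • m) = a ^ p • φ m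

namespace FrobMod

variable {p : ℕ} {R : Type} [CommRing R] {M : Type} [AddCommGroup M] [Module R M]

/-- An `R[φ]`-module is nilpotent if some power of `φ` is zero. -/
def IsNilpotentMod (F : FrobMod p R M) : Prop :=
  ∃ e : ℕ, ∀ m : M, F.φ^[e] m = 0

/-- A submodule is an `R[φ]`-submodule if it is stable under `φ`. -/
def IsStable (F : FrobMod p R M) (N : Submodule R M) : Prop :=
  ∀ m ∈ N, F.φ m ∈ N

/-- An `R[φ]`-module is simple if it is nonzero and has no nontrivial `φ`-stable submodules. -/
def IsSimpleMod (F : FrobMod p R M) : Prop :=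
  (∃ m : M, m ≠ 0) ∧ ∀ N : Submodule R M, F.IsStable N → N = ⊥ ∨ N = ⊤

/-- An `R[φ]`-module has finite length if there is a uniform bound on the lengths of
strictly increasing chains of `φ`-stable submodules. -/
def HasFiniteLength (F : FrobMod p R M) : Prop :=
  ∃ n : ℕ, ∀ (m : ℕ) (c : Fin m → Submodule R M),
    (∀ i, F.IsStable (c i)) → StrictMono c → m ≤ n

end FrobMod

/-- `g : R₀ →+* R` exhibits `R` as the (direct limit) perfection of `R₀`:
`R` is perfect, every element of `R` has a `p`-power landing in the image of `R₀`, and the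
kernel of `g` consists exactly of the nilpotent elements. -/
structure IsRingPerfection (p : ℕ) {R₀ R : Type} [CommRing R₀] [CommRing R]
    (g : R₀ →+* R) : Prop where
  perfect : Function.Bijective fun x : R => x ^ p
  colim : ∀ x : R, ∃ (n : ℕ) (y : R₀), x ^ p ^ n = g y
  ker : ∀ y : R₀, g y = 0 ↔ ∃ n : ℕ, y ^ p ^ n = 0

/-- `ι : M →ₗ[R] P` exhibits `(P, F)` as the Frobenius perfection
`colim (M → φ_*M → φ_*²M → ⋯)` of the `R[φ]`-module `(M, F₀)`, within `R[φ]`-modules. -/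
structure IsFrobPerfection (p : ℕ) {R : Type} [CommRing R] {M P : Type}
    [AddCommGroup M] [Module R M] [AddCommGroup P] [Module R P]
    (F₀ : FrobMod p R M) (F : FrobMod p R P) (ι : M →ₗ[R] P) : Prop where
  bijective : Function.Bijective F.φ
  comm : ∀ m, ι (F₀.φ m) = F.φ (ι m)
  surj : ∀ x : P, ∃ (e : ℕ) (m : M), F.φ^[e] x = ι m
  ker : ∀ m, ι m = 0 ↔ ∃ e : ℕ, F₀.φ^[e] m = 0

/-- `ι : M₀ →+ P` exhibits `(P, F)`, an `R[φ]`-module over the perfection `g : R₀ →+* R`,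
as the Frobenius perfection `M₀^perf = colim φ_*^e M₀` of the `R₀[φ]`-module `(M₀, F₀)`. -/
structure IsModPerfection (p : ℕ) {R₀ R : Type} [CommRing R₀] [CommRing R] (g : R₀ →+* R)
    {M₀ : Type} [AddCommGroup M₀] [Module R₀ M₀] (F₀ : FrobMod p R₀ M₀)
    {P : Type} [AddCommGroup P] [Module R P] (F : FrobMod p R P)
    (ι : M₀ →+ P) : Prop where
  bijective : Function.Bijective F.φ
  semilinear : ∀ (a : R₀) (m : M₀), ι (a • m) = g a • ι m
  comm : ∀ m, ι (F₀.φ m) = F.φ (ι m)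
  surj : ∀ x : P, ∃ (e : ℕ) (m : M₀), F.φ^[e] x = ι m
  ker : ∀ m, ι m = 0 ↔ ∃ e : ℕ, F₀.φ^[e] m = 0

open IsLocalRing in
/-- Let `(R, m)` be the perfection of a noetherian local `𝔽_p`-algebra
with `d = dim R > 0`. If `H = H^d_m(R)` is a simple `R[φ]`-module with trivial annihilator
(and, as always, every element of `H` is annihilated by powers of a system of parameters
generating `m` up to radical), then there is no nonzero `x ∈ H` with `φ(x) = x`. -/
theorem no_frobenius_fixed_point_in_top_localCohomology
    {p : ℕ} [Fact p.Prime] {R₀ R : Type} [CommRing R₀] [CommRing R]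
    [CharP R₀ p] [CharP R p] [IsNoetherianRing R₀] [IsLocalRing R₀] [IsLocalRing R]
    (g : R₀ →+* R) (hg : IsRingPerfection p g)
    (d : ℕ) (hd : 0 < d) (hdim : ringKrullDim R₀ = d)
    {H : Type} [AddCommGroup H] [Module R H] (F : FrobMod p R H)
    (hsimple : F.IsSimpleMod)
    (hfaithful : ∀ r : R, (∀ x : H, r • x = 0) → r = 0)
    (hparam : ∃ s : Finset R, (↑s : Set R) ⊆ (maximalIdeal R : Set R) ∧
      maximalIdeal R ≤ (Ideal.span (↑s : Set R)).radical ∧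
      ∀ x : H, ∃ n : ℕ, ∀ r ∈ s, r ^ n • x = 0) :
    ¬ ∃ x : H, x ≠ 0 ∧ F.φ x = x := by
  rintro ⟨x, hx0, hfix⟩
  have hp : p.Prime := Fact.out
  have hinj : Function.Injective fun x : R => x ^ p := hg.perfect.1
  -- R is reduced
  have hred : ∀ r : R, IsNilpotent r → r = 0 := by
    have key : ∀ k : ℕ, ∀ r : R, r ^ p ^ k = 0 → r = 0 := by
      intro k
      induction k with
      | zero => intro r h; simpa using h
      | succ k ih =>
        intro r h
        refine ih r (hinj ?_)
        show (r ^ p ^ k) ^ p = (0 : R) ^ p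
        rw [← pow_mul, ← pow_succ, h, zero_pow hp.ne_zero]
    intro r hr
    obtain ⟨n, hn⟩ := hr
    refine key n r ?_
    have hle : n ≤ p ^ n := Nat.le_of_lt (Nat.lt_pow_self hp.one_lt : n < p ^ n)
    calc r ^ p ^ n = r ^ n * r ^ (p ^ n - n) := by rw [← pow_add, Nat.add_sub_cancel' hle]
      _ = 0 := by rw [hn, zero_mul]
  -- span of the fixed point is stable, hence everything
  have hstab : F.IsStable (Submodule.span R {x}) := by
    intro m hm
    obtain ⟨a, rfl⟩ := Submodule.mem_span_singleton.mp hm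
    rw [F.semilinear, hfix]
    exact Submodule.smul_mem _ _ (Submodule.mem_span_singleton_self x)
  have htop : Submodule.span R {x} = ⊤ := by
    rcases hsimple.2 _ hstab with h | h
    · exact absurd ((Submodule.mem_bot R).mp (h ▸ Submodule.mem_span_singleton_self x)) hx0
    · exact h
  obtain ⟨s, hs_sub, hs_rad, hs_ann⟩ := hparam
  obtain ⟨n, hn⟩ := hs_ann x
  have hr0 : ∀ r ∈ s, r = 0 := by
    intro r hrs
    apply hred r
    refine ⟨n + 1, hfaithful _ ?_⟩
    intro y
    have hy : y ∈ Submodule.span R {x} := htop ▸ Submodule.mem_top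
    obtain ⟨a, rfl⟩ := Submodule.mem_span_singleton.mp hy
    rw [smul_comm, pow_succ', mul_smul, hn r hrs, smul_zero, smul_zero]
  -- the maximal ideal of R is zero
  have hmbot : maximalIdeal R = ⊥ := by
    have hspan : Ideal.span (↑s : Set R) = ⊥ := by
      rw [eq_bot_iff, Ideal.span_le]
      intro r hr
      simpa using hr0 r hr
    rw [eq_bot_iff]
    intro r hr
    have hrad := hs_rad hr
    rw [hspan] at hrad
    obtain ⟨k, hk⟩ := hrad
    rw [Ideal.mem_bot] at hk ⊢
    exact hred r ⟨k, hk⟩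
  -- there is a non-nilpotent element of the maximal ideal of R₀
  have hy : ∃ y ∈ maximalIdeal R₀, ¬ IsNilpotent y := by
    by_contra h
    push_neg at h
    have hsub : Subsingleton (PrimeSpectrum R₀) := by
      constructor
      intro P Q
      have key : ∀ T : PrimeSpectrum R₀, T.asIdeal = maximalIdeal R₀ := by
        intro T
        refine le_antisymm (IsLocalRing.le_maximalIdeal T.isPrime.ne_top) ?_
        intro y hy
        exact nilradical_le_prime T.asIdeal (mem_nilradical.mpr (h y hy))
      exact PrimeSpectrum.ext ((key P).trans (key Q).symm)
    have h0 : ringKrullDim R₀ ≤ 0 := Order.krullDim_nonpos_of_subsingleton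
    rw [hdim] at h0
    have h0' : d ≤ 0 := by exact_mod_cast h0
    omega
  obtain ⟨y, hym, hynil⟩ := hy
  have hgy : g y ≠ 0 := by
    intro h
    obtain ⟨k, hk⟩ := (hg.ker y).mp h
    exact hynil ⟨p ^ k, hk⟩
  have hu : IsUnit (g y) := by
    refine IsLocalRing.notMem_maximalIdeal.mp fun h => hgy ?_
    rwa [hmbot, Ideal.mem_bot] at h
  obtain ⟨z, hz⟩ := isUnit_iff_exists_inv.mp hu
  obtain ⟨k, w, hw⟩ := hg.colim z
  have h1 : g (y ^ p ^ k * w) = 1 := by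
    rw [map_mul, map_pow, ← hw, ← mul_pow, hz, one_pow]
  have h0 : g (y ^ p ^ k * w - 1) = 0 := by rw [map_sub, h1, map_one, sub_self]
  obtain ⟨j, hj⟩ := (hg.ker _).mp h0
  have hnil : IsNilpotent (y ^ p ^ k * w - 1) := ⟨p ^ j, hj⟩
  have hun : IsUnit (y ^ p ^ k * w) := by
    have := hnil.isUnit_add_one
    simpa using this
  have hup : IsUnit (y ^ p ^ k) := isUnit_of_mul_isUnit_left hun
  have huy : IsUnit y := (isUnit_pow_iff (pow_pos hp.pos k).ne').mp hup
  exact IsLocalRing.notMem_maximalIdeal.mpr huy hym
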